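/- Let f : ℝ≥0 → ℝ≥0 satisfy f(x) = x - c·x^{1+p} + o(x^{1+p}) as x → 0⁺ for positive constants c, p > 0. Then for x₁ > 0 small enough, the sequence defined by x_{n+1} = f(x_n) converges to 0 at the rate x_n ~ (c·p·n)^{-1/p} as n → ∞. -/

import Mathlib

open Filter Topology

private lemma aux_slope (p : ℝ) :
    Tendsto (fun t : ℝ => ((1 - t) ^ (-p) - 1) / t) (𝓝[>] (0:ℝ)) (𝓝 p) := by
  have h1 : HasDerivAt (fun x : ℝ => x ^ (-p)) (-p * (1:ℝ) ^ (-p - 1)) 1 :=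
    Real.hasDerivAt_rpow_const (Or.inl one_ne_zero)
  have h2 : HasDerivAt (fun t : ℝ => 1 - t) (-1) 0 := by
    simpa using (hasDerivAt_id (0:ℝ)).const_sub 1
  have h3 : HasDerivAt (fun t : ℝ => (1 - t) ^ (-p)) ((-p * (1:ℝ) ^ (-p - 1)) * (-1)) 0 := by
    have : (fun t : ℝ => (1 - t) ^ (-p)) = (fun x : ℝ => x ^ (-p)) ∘ (fun t : ℝ => 1 - t) := rfl
    rw [this]
    exact HasDerivAt.comp 0 (by simpa using h1) h2
  have h4 : HasDerivAt (fun t : ℝ => (1 - t) ^ (-p)) p 0 := by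
    simpa [Real.one_rpow] using h3
  have h5 := hasDerivAt_iff_tendsto_slope.mp h4
  have h6 : Tendsto (slope (fun t : ℝ => (1 - t) ^ (-p)) 0) (𝓝[>] (0:ℝ)) (𝓝 p) :=
    h5.mono_left (nhdsWithin_mono _ (fun x hx => ne_of_gt hx))
  refine h6.congr (fun t => ?_)
  simp [slope_def_field, Real.one_rpow]

theorem stmt_0 (f : ℝ → ℝ) (hf : ∀ x, 0 ≤ x → 0 ≤ f x) (c p : ℝ) (hc : 0 < c) (hp : 0 < p)
    (hasymp : Tendsto (fun x => (f x - x + c * x ^ (1 + p)) / x ^ (1 + p))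
      (nhdsWithin 0 (Set.Ioi 0)) (nhds 0)) :
    ∃ δ > (0:ℝ), ∀ x₁ : ℝ, 0 < x₁ → x₁ < δ →
      Tendsto (fun n : ℕ => f^[n] x₁) atTop (nhds 0) ∧
      Tendsto (fun n : ℕ => f^[n] x₁ * (c * p * (n : ℝ)) ^ (1 / p)) atTop (nhds 1) := by
  classical
  set g : ℝ → ℝ := fun x => (f x - x + c * x ^ (1 + p)) / x ^ (1 + p) with hg_def
  -- choose δ₀ from the asymptotic hypothesis
  obtain ⟨δ₀, hδ₀pos, hδ₀⟩ := Metric.tendsto_nhdsWithin_nhds.mp hasymp (c/2) (half_pos hc)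
  have h23 : (0:ℝ) < 2 / (3 * c) := by positivity
  set δ : ℝ := min δ₀ ((2 / (3 * c)) ^ (1/p)) with hδ_def
  have hδpos : 0 < δ := lt_min hδ₀pos (Real.rpow_pos_of_pos h23 _)
  -- key pointwise facts for 0 < x < δ
  have key : ∀ x : ℝ, 0 < x → x < δ →
      f x = x * (1 - (c - g x) * x ^ p) ∧ c/2 < c - g x ∧ c - g x < 3/2 * c ∧
      (c - g x) * x ^ p < 1 := by
    intro x hx hxδ
    have hxp : (0:ℝ) < x ^ p := Real.rpow_pos_of_pos hx p
    have hx1p : (0:ℝ) < x ^ (1 + p) := Real.rpow_pos_of_pos hx _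
    have hgx : |g x| < c/2 := by
      have := hδ₀ (Set.mem_Ioi.mpr hx) (by
        simpa [Real.dist_eq, abs_of_pos hx] using lt_of_lt_of_le hxδ (min_le_left _ _))
      simpa [Real.dist_eq] using this
    obtain ⟨hgl, hgu⟩ := abs_lt.mp hgx
    have hsplit : x ^ (1 + p) = x * x ^ p := by
      rw [Real.rpow_add hx, Real.rpow_one]
    have hfx : f x = x - (c - g x) * x ^ (1 + p) := by
      have h : g x * x ^ (1 + p) = f x - x + c * x ^ (1 + p) := by
        rw [hg_def]
        exact div_mul_cancel₀ _ hx1p.ne'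
      nlinarith [h]
    have hxpb : x ^ p < 2 / (3 * c) := by
      have hxlt : x < (2 / (3 * c)) ^ (1/p) := lt_of_lt_of_le hxδ (min_le_right _ _)
      calc x ^ p < ((2 / (3 * c)) ^ (1/p)) ^ p :=
            Real.rpow_lt_rpow hx.le hxlt hp
        _ = 2 / (3 * c) := by
            rw [one_div, Real.rpow_inv_rpow h23.le hp.ne']
    refine ⟨?_, by linarith, by linarith, ?_⟩
    · rw [hfx, hsplit]; ring
    · have h1 : (c - g x) * x ^ p < (3/2 * c) * x ^ p := by nlinarith
      have h2 : (3/2 * c) * x ^ p < (3/2 * c) * (2 / (3 * c)) := by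
        have : (0:ℝ) < 3/2 * c := by linarith
        exact mul_lt_mul_of_pos_left hxpb this
      have h3 : (3/2 * c) * (2 / (3 * c)) = 1 := by field_simp
      linarith
  refine ⟨δ, hδpos, fun x₁ hx₁ hx₁δ => ?_⟩
  set X : ℕ → ℝ := fun n => f^[n] x₁ with hX_def
  set T : ℕ → ℝ := fun n => (c - g (X n)) * (X n) ^ p with hT_def
  -- basic properties of the orbit
  have hXsucc : ∀ n, X (n+1) = f (X n) := fun n => Function.iterate_succ_apply' f n x₁
  have hbasic : ∀ n, 0 < X n ∧ X n < δ := by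
    intro n
    induction n with
    | zero => exact ⟨hx₁, hx₁δ⟩
    | succ n ih =>
      obtain ⟨hpos, hlt⟩ := ih
      obtain ⟨heq, hl, hu, ht1⟩ := key (X n) hpos hlt
      have htpos : 0 < (c - g (X n)) * (X n) ^ p := by
        have := Real.rpow_pos_of_pos hpos p
        nlinarith
      have hfpos : 0 < f (X n) := by rw [heq]; nlinarith
      have hflt : f (X n) < X n := by
        rw [heq]; nlinarith
      rw [hXsucc]
      exact ⟨hfpos, lt_trans hflt hlt⟩
  have hXpos : ∀ n, 0 < X n := fun n => (hbasic n).1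
  have hXδ : ∀ n, X n < δ := fun n => (hbasic n).2
  have hkey : ∀ n, X (n+1) = X n * (1 - T n) ∧ c/2 < c - g (X n) ∧
      c - g (X n) < 3/2 * c ∧ T n < 1 := by
    intro n
    obtain ⟨heq, hl, hu, ht1⟩ := key (X n) (hXpos n) (hXδ n)
    exact ⟨by rw [hXsucc]; exact heq, hl, hu, ht1⟩
  have hTpos : ∀ n, 0 < T n := by
    intro n
    have := Real.rpow_pos_of_pos (hXpos n) p
    have := (hkey n).2.1
    have : (0:ℝ) < c - g (X n) := by linarith
    exact mul_pos this (Real.rpow_pos_of_pos (hXpos n) p)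
  have hdec : ∀ n, X (n+1) < X n := by
    intro n
    obtain ⟨heq, _, _, ht1⟩ := hkey n
    have := hTpos n
    rw [heq]; nlinarith [hXpos n]
  have hanti : Antitone X := antitone_nat_of_succ_le (fun n => (hdec n).le)
  have hbdd : BddBelow (Set.range X) := ⟨0, fun y ⟨n, hn⟩ => hn ▸ (hXpos n).le⟩
  have hXtendsL : Tendsto X atTop (𝓝 (⨅ n, X n)) := tendsto_atTop_ciInf hanti hbdd
  set L : ℝ := ⨅ n, X n with hL_def
  have hL0 : 0 ≤ L := le_ciInf fun n => (hXpos n).le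
  have hLle : ∀ n, L ≤ X n := fun n => ciInf_le hbdd n
  have hLzero : L = 0 := by
    by_contra hne
    have hLpos : 0 < L := lt_of_le_of_ne hL0 (Ne.symm hne)
    have hgap : ∀ n, X n - X (n+1) ≥ c/2 * L ^ (1+p) := by
      intro n
      obtain ⟨heq, hl, _, _⟩ := hkey n
      have h1 : X n - X (n+1) = (c - g (X n)) * (X n) ^ (1+p) := by
        rw [heq]
        have : (X n) ^ (1+p) = X n * (X n) ^ p := by
          rw [Real.rpow_add (hXpos n), Real.rpow_one]
        rw [this, hT_def]; ring
      have h2 : L ^ (1+p) ≤ (X n) ^ (1+p) :=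
        Real.rpow_le_rpow hL0 (hLle n) (by linarith)
      have h3 : (0:ℝ) < L ^ (1+p) := Real.rpow_pos_of_pos hLpos _
      rw [h1]; nlinarith
    have hXs : Tendsto (fun n => X (n+1)) atTop (𝓝 L) :=
      hXtendsL.comp (tendsto_add_atTop_nat 1)
    have hdiff : Tendsto (fun n => X n - X (n+1)) atTop (𝓝 0) := by
      simpa using hXtendsL.sub hXs
    have : c/2 * L ^ (1+p) ≤ 0 := ge_of_tendsto' hdiff (fun n => hgap n)
    have : (0:ℝ) < L ^ (1+p) := Real.rpow_pos_of_pos hLpos _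
    nlinarith
  have hXlim : Tendsto X atTop (𝓝 0) := by rw [← hLzero]; exact hXtendsL
  -- convergence within Ioi 0
  have hXlim' : Tendsto X atTop (𝓝[>] 0) :=
    tendsto_nhdsWithin_of_tendsto_nhds_of_eventually_within _ hXlim
      (Eventually.of_forall fun n => Set.mem_Ioi.mpr (hXpos n))
  have hg0 : Tendsto (fun n => g (X n)) atTop (𝓝 0) := hasymp.comp hXlim'
  have hcg : Tendsto (fun n => c - g (X n)) atTop (𝓝 c) := by
    simpa using (tendsto_const_nhds (x := c)).sub hg0
  have hXp0 : Tendsto (fun n => (X n) ^ p) atTop (𝓝 0) := by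
    have hcont := (Real.continuousAt_rpow_const 0 p (Or.inr hp.le)).tendsto
    have := hcont.comp hXlim
    simpa [Function.comp_def, Real.zero_rpow hp.ne'] using this
  have hT0 : Tendsto T atTop (𝓝 0) := by
    simpa using hcg.mul hXp0
  have hT0' : Tendsto T atTop (𝓝[>] 0) :=
    tendsto_nhdsWithin_of_tendsto_nhds_of_eventually_within _ hT0
      (Eventually.of_forall fun n => Set.mem_Ioi.mpr (hTpos n))
  have hslope : Tendsto (fun n => ((1 - T n) ^ (-p) - 1) / T n) atTop (𝓝 p) :=
    (aux_slope p).comp hT0'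
  -- the sequence a n = X n ^ (-p)
  set a : ℕ → ℝ := fun n => (X n) ^ (-p) with ha_def
  set d : ℕ → ℝ := fun n => a (n+1) - a n with hd_def
  have hd_eq : ∀ n, d n = (c - g (X n)) * (((1 - T n) ^ (-p) - 1) / T n) := by
    intro n
    obtain ⟨heq, _, _, ht1⟩ := hkey n
    have h1Tpos : 0 < 1 - T n := by linarith
    have hXppos : 0 < (X n) ^ p := Real.rpow_pos_of_pos (hXpos n) p
    have ha1 : a (n+1) = (X n) ^ (-p) * (1 - T n) ^ (-p) := by
      rw [ha_def]
      simp only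
      rw [heq, Real.mul_rpow (hXpos n).le h1Tpos.le]
    have hTne : T n ≠ 0 := (hTpos n).ne'
    have hXnp : (X n) ^ (-p) = (c - g (X n)) / T n := by
      rw [Real.rpow_neg (hXpos n).le]
      rw [eq_div_iff hTne, hT_def]
      simp only
      rw [mul_comm (c - g (X n)) ((X n) ^ p), ← mul_assoc,
        inv_mul_cancel₀ hXppos.ne', one_mul]
    have hstep : d n = (X n) ^ (-p) * ((1 - T n) ^ (-p) - 1) := by
      rw [hd_def]
      simp only
      rw [ha1, ha_def]
      ring
    rw [hstep, hXnp, div_mul_eq_mul_div, mul_div_assoc]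
  have hd_lim : Tendsto d atTop (𝓝 (c * p)) := by
    have := hcg.mul hslope
    refine Tendsto.congr (fun n => (hd_eq n).symm) this
  -- Cesàro
  have hsum : ∀ n, a n = a 0 + ∑ i ∈ Finset.range n, d i := by
    intro n
    rw [hd_def]
    rw [Finset.sum_range_sub (fun i => a i) n]
    ring
  have hcesaro : Tendsto (fun n : ℕ => (n:ℝ)⁻¹ * ∑ i ∈ Finset.range n, d i) atTop (𝓝 (c*p)) :=
    hd_lim.cesaro
  have han : Tendsto (fun n : ℕ => a n / n) atTop (𝓝 (c*p)) := by
    have h0 : Tendsto (fun n : ℕ => a 0 / n) atTop (𝓝 0) :=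
      tendsto_const_div_atTop_nhds_zero_nat (a 0)
    have := h0.add hcesaro
    rw [zero_add] at this
    refine Tendsto.congr (fun n => ?_) this
    rw [hsum n]
    rw [add_div]
    congr 1
    rw [inv_mul_eq_div]
  have hcp : (0:ℝ) < c * p := mul_pos hc hp
  have hone : Tendsto (fun n : ℕ => (c * p * n) * (X n) ^ p) atTop (𝓝 1) := by
    have hdiv : Tendsto (fun n : ℕ => (c*p) / (a n / n)) atTop (𝓝 ((c*p)/(c*p))) :=
      tendsto_const_nhds.div han hcp.ne'
    rw [div_self hcp.ne'] at hdiv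
    refine Tendsto.congr' ?_ hdiv
    filter_upwards [eventually_ge_atTop 1] with n hn
    have hnpos : (0:ℝ) < n := by exact_mod_cast hn
    have hXppos : 0 < (X n) ^ p := Real.rpow_pos_of_pos (hXpos n) p
    have hainv : a n = ((X n) ^ p)⁻¹ := by
      rw [ha_def]; simp only; rw [Real.rpow_neg (hXpos n).le]
    rw [hainv]
    field_simp
  have hfinal : Tendsto (fun n : ℕ => X n * (c * p * n) ^ (1/p)) atTop (𝓝 1) := by
    have hcont := (Real.continuousAt_rpow_const 1 (1/p) (Or.inl one_ne_zero)).tendsto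
    have hcomp := hcont.comp hone
    rw [Real.one_rpow] at hcomp
    refine Tendsto.congr' ?_ hcomp
    filter_upwards [eventually_ge_atTop 1] with n hn
    have hnpos : (0:ℝ) < n := by exact_mod_cast hn
    have hcpn : (0:ℝ) < c * p * n := mul_pos hcp hnpos
    have hXppos : (0:ℝ) ≤ (X n) ^ p := (Real.rpow_pos_of_pos (hXpos n) p).le
    show ((c * p * n) * (X n) ^ p) ^ (1/p) = X n * (c * p * n) ^ (1/p)
    rw [Real.mul_rpow hcpn.le hXppos, one_div,
      Real.rpow_rpow_inv (hXpos n).le hp.ne']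
    ring
  exact ⟨hXlim, hfinal⟩
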